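/- Every strongly tree-submodular function is weakly tree-submodular: if f:D→ℝ satisfies f(x)+f(y) ≥ f(x⊓y)+f(x⊔y) for all x,y∈D, then f(x)+f(y) ≥ f(x∧y)+f(x∨y) for all x,y∈D. -/

import Mathlib

/-- A finite rooted tree on vertex set `V`, encoded by its root, the parent function
(with `parent root = root`) and the depth function (distance to the root). -/
structure RTree (V : Type*) where
  root : V
  parent : V → V
  depth : V → ℕ
  parent_root : parent root = root
  depth_root : depth root = 0
  depth_parent : ∀ v, v ≠ root → depth (parent v) + 1 = depth v

namespace RTree

variable {V : Type*} (T : RTree V)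

/-- `a ⪯ b` : `a` is an ancestor of `b`, i.e. `a` lies on the path from `b` to the root. -/
def anc (a b : V) : Prop := ∃ k : ℕ, T.parent^[k] b = a

theorem iterate_depth_aux : ∀ (n : ℕ) (v : V), T.depth v = n → T.parent^[n] v = T.root := by
  intro n
  induction n with
  | zero =>
    intro v hn
    by_cases hv : v = T.root
    · simp [hv]
    · have := T.depth_parent v hv; omega
  | succ n ih =>
    intro v hn
    have hv : v ≠ T.root := by
      intro h; rw [h, T.depth_root] at hn; omega
    have h := T.depth_parent v hv
    rw [Function.iterate_succ_apply]
    exact ih (T.parent v) (by omega)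

theorem iterate_depth (v : V) : T.parent^[T.depth v] v = T.root :=
  T.iterate_depth_aux (T.depth v) v rfl

theorem anc_root (b : V) : T.anc T.root b := ⟨T.depth b, T.iterate_depth b⟩

theorem exists_lcaIndex (a b : V) : ∃ k : ℕ, T.anc (T.parent^[k] a) b :=
  ⟨T.depth a, by rw [T.iterate_depth a]; exact T.anc_root b⟩

open Classical in
/-- The highest common ancestor of `a` and `b` : the deepest vertex that is an ancestor
of both `a` and `b` (i.e. the unique vertex of the path `P[a→b]` that is an ancestor of both). -/
noncomputable def lca (a b : V) : V := T.parent^[Nat.find (T.exists_lcaIndex a b)] a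

/-- `ρ(a,b)` : the number of edges of the unique path `P[a→b]` from `a` to `b`. -/
noncomputable def dist (a b : V) : ℕ :=
  (T.depth a - T.depth (T.lca a b)) + (T.depth b - T.depth (T.lca a b))

open Classical in
/-- `P[a→b, d]` : the `d`-th vertex of the path from `a` to `b` (first the ascending part
from `a` to the highest common ancestor, then the descending part towards `b`);
by convention it equals `b` for `d > ρ(a,b)`. -/
noncomputable def pathVertex (a b : V) (d : ℕ) : V :=
  if T.dist a b ≤ d then b
  else if d ≤ T.depth a - T.depth (T.lca a b) then T.parent^[d] a
  else T.parent^[T.dist a b - d] b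

open Classical in
/-- `a ⊓ b` : the member of `{P[a→b,⌊ρ(a,b)/2⌋], P[a→b,⌈ρ(a,b)/2⌉]}` that is an
ancestor of the other one. -/
noncomputable def cap (a b : V) : V :=
  if T.anc (T.pathVertex a b (T.dist a b / 2)) (T.pathVertex a b ((T.dist a b + 1) / 2))
  then T.pathVertex a b (T.dist a b / 2)
  else T.pathVertex a b ((T.dist a b + 1) / 2)

open Classical in
/-- `a ⊔ b` : the member of `{P[a→b,⌊ρ(a,b)/2⌋], P[a→b,⌈ρ(a,b)/2⌉]}` that is a
descendant of the other one. -/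
noncomputable def cup (a b : V) : V :=
  if T.anc (T.pathVertex a b (T.dist a b / 2)) (T.pathVertex a b ((T.dist a b + 1) / 2))
  then T.pathVertex a b ((T.dist a b + 1) / 2)
  else T.pathVertex a b (T.dist a b / 2)

/-- `a ∧ b` : the highest common ancestor of `a` and `b`. -/
noncomputable def meet (a b : V) : V := T.lca a b

/-- `a ∨ b` : the unique vertex of `P[a→b]` with `ρ(a, a∨b) = ρ(a∧b, b)`. -/
noncomputable def join (a b : V) : V :=
  T.pathVertex a b (T.depth b - T.depth (T.lca a b))

/-- `a ↑^d b = P[a→b,d] ∧ b`. -/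
noncomputable def up (d : ℕ) (a b : V) : V := T.meet (T.pathVertex a b d) b

/-- `a ↓_d b = P[a→b, ρ(a ↑^d b, b)]`. -/
noncomputable def down (d : ℕ) (a b : V) : V :=
  T.pathVertex a b (T.dist (T.up d a b) b)

end RTree

namespace RTree

variable {V : Type*} (T : RTree V)

-- ==================== new infrastructure ====================

theorem depth_iterate (v : V) : ∀ j, j ≤ T.depth v → T.depth (T.parent^[j] v) + j = T.depth v := by
  intro j
  induction j with
  | zero => simp
  | succ j ih =>
    intro hj
    have hih := ih (by omega)
    have hne : T.parent^[j] v ≠ T.root := by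
      intro h
      rw [h, T.depth_root] at hih; omega
    have := T.depth_parent _ hne
    rw [Function.iterate_succ_apply']
    omega

theorem iterate_root' : ∀ j, T.parent^[j] T.root = T.root := by
  intro j
  induction j with
  | zero => rfl
  | succ j ih => rw [Function.iterate_succ_apply', ih, T.parent_root]

theorem iterate_of_ge_depth (v : V) (j : ℕ) (h : T.depth v ≤ j) : T.parent^[j] v = T.root := by
  have : j = (j - T.depth v) + T.depth v := by omega
  rw [this, Function.iterate_add_apply, T.iterate_depth, T.iterate_root']

theorem anc.depth_le {w v : V} (h : T.anc w v) : T.depth w ≤ T.depth v := by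
  obtain ⟨k, hk⟩ := h
  by_cases hkd : k ≤ T.depth v
  · have hd := T.depth_iterate v k hkd
    rw [hk] at hd; omega
  · rw [T.iterate_of_ge_depth v k (by omega)] at hk
    rw [← hk, T.depth_root]; omega

theorem anc_iff_iterate {w v : V} :
    T.anc w v ↔ T.parent^[T.depth v - T.depth w] v = w := by
  constructor
  · rintro ⟨k, hk⟩
    by_cases hkd : k ≤ T.depth v
    · have hd := T.depth_iterate v k hkd
      rw [hk] at hd
      have : T.depth v - T.depth w = k := by omega
      rw [this, hk]
    · have hw : w = T.root := by rw [← hk, T.iterate_of_ge_depth v k (by omega)]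
      rw [hw, T.depth_root, Nat.sub_zero]
      exact T.iterate_depth v
  · intro h; exact ⟨_, h⟩

theorem anc_refl (v : V) : T.anc v v := ⟨0, rfl⟩

theorem anc_trans {u w v : V} (h1 : T.anc u w) (h2 : T.anc w v) : T.anc u v := by
  obtain ⟨k, hk⟩ := h1; obtain ⟨l, hl⟩ := h2
  exact ⟨k + l, by rw [Function.iterate_add_apply, hl, hk]⟩

theorem anc_antisymm {u v : V} (h1 : T.anc u v) (h2 : T.anc v u) : u = v := by
  have d1 := h1.depth_le
  have d2 := h2.depth_le
  have := (T.anc_iff_iterate (w := u) (v := v)).1 h1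
  rw [show T.depth v - T.depth u = 0 by omega] at this
  exact this.symm

/-- among ancestors of a vertex, the shallower is an ancestor of the deeper -/
theorem anc_of_anc_of_depth_le {w w' v : V} (h1 : T.anc w v) (h2 : T.anc w' v)
    (hd : T.depth w ≤ T.depth w') : T.anc w w' := by
  have e1 := (T.anc_iff_iterate).1 h1
  have e2 := (T.anc_iff_iterate).1 h2
  have d1 := h1.depth_le
  have d2 := h2.depth_le
  refine ⟨T.depth w' - T.depth w, ?_⟩
  have harith : (T.depth w' - T.depth w) + (T.depth v - T.depth w') = T.depth v - T.depth w := by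
    omega
  have key : T.parent^[T.depth w' - T.depth w] (T.parent^[T.depth v - T.depth w'] v) = w := by
    rw [← Function.iterate_add_apply, harith, e1]
  rw [e2] at key
  exact key

open Classical in
theorem lca_anc_left (a b : V) : T.anc (T.lca a b) a := ⟨_, rfl⟩

open Classical in
theorem lca_anc_right (a b : V) : T.anc (T.lca a b) b := Nat.find_spec (T.exists_lcaIndex a b)

open Classical in
theorem anc_lca {w a b : V} (h1 : T.anc w a) (h2 : T.anc w b) : T.anc w (T.lca a b) := by
  have e1 := (T.anc_iff_iterate).1 h1
  have hj : T.anc (T.parent^[T.depth a - T.depth w] a) b := by rw [e1]; exact h2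
  have hfind : Nat.find (T.exists_lcaIndex a b) ≤ T.depth a - T.depth w :=
    Nat.find_min' _ hj
  have hl : T.lca a b = T.parent^[Nat.find (T.exists_lcaIndex a b)] a := rfl
  refine ⟨T.depth a - T.depth w - Nat.find (T.exists_lcaIndex a b), ?_⟩
  have harith : (T.depth a - T.depth w - Nat.find (T.exists_lcaIndex a b)) +
      Nat.find (T.exists_lcaIndex a b) = T.depth a - T.depth w := by omega
  rw [hl, ← Function.iterate_add_apply, harith, e1]

theorem depth_lca_le_left (a b : V) : T.depth (T.lca a b) ≤ T.depth a :=
  (T.lca_anc_left a b).depth_le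

theorem depth_lca_le_right (a b : V) : T.depth (T.lca a b) ≤ T.depth b :=
  (T.lca_anc_right a b).depth_le

-- part 2 : path vertex machinery (appended to infra for testing)
/-- height of `a` above `lca a b` -/
noncomputable def hgt (a b : V) : ℕ := T.depth a - T.depth (T.lca a b)

/-- the `t`-th vertex on the path from `a` to `b` (clamped at `b`) -/
noncomputable def pv (a b : V) (t : ℕ) : V :=
  if t ≤ T.hgt a b then T.parent^[t] a else T.parent^[T.dist a b - t] b

theorem dist_eq_hgt_add (a b : V) :
    T.dist a b = T.hgt a b + (T.depth b - T.depth (T.lca a b)) := rfl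

theorem hgt_le_dist (a b : V) : T.hgt a b ≤ T.dist a b := Nat.le_add_right _ _

theorem pv_zero (a b : V) : T.pv a b 0 = a := by
  simp [pv]

theorem pv_eq_left (a b : V) {t : ℕ} (h : t ≤ T.hgt a b) :
    T.pv a b t = T.parent^[t] a := if_pos h

theorem pv_hgt (a b : V) : T.pv a b (T.hgt a b) = T.lca a b := by
  rw [T.pv_eq_left a b le_rfl]
  exact (T.anc_iff_iterate.1 (T.lca_anc_left a b)) -- note: hgt = depth a - depth lca definitionally

theorem pv_eq_right (a b : V) {t : ℕ} (h : T.hgt a b ≤ t) :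
    T.pv a b t = T.parent^[T.dist a b - t] b := by
  rcases eq_or_lt_of_le h with he | hlt
  · rw [← he, T.pv_hgt a b]
    have : T.dist a b - T.hgt a b = T.depth b - T.depth (T.lca a b) := by
      rw [T.dist_eq_hgt_add a b]; omega
    rw [this]
    exact (T.anc_iff_iterate.1 (T.lca_anc_right a b)).symm
  · exact if_neg (by omega)

theorem hgt_le_depth (a b : V) : T.hgt a b ≤ T.depth a := Nat.sub_le _ _

theorem depth_pv_left (a b : V) {t : ℕ} (h : t ≤ T.hgt a b) :
    T.depth (T.pv a b t) + t = T.depth a := by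
  rw [T.pv_eq_left a b h]
  exact T.depth_iterate a t (le_trans h (T.hgt_le_depth a b))

theorem depth_pv_right (a b : V) {t : ℕ} (h1 : T.hgt a b ≤ t) (h2 : t ≤ T.dist a b) :
    T.depth (T.pv a b t) + (T.dist a b - t) = T.depth b := by
  rw [T.pv_eq_right a b h1]
  refine T.depth_iterate b _ ?_
  have := T.dist_eq_hgt_add a b
  have := T.depth_lca_le_right a b
  omega

theorem pv_le_dist (a b : V) {t : ℕ} (h : T.dist a b ≤ t) : T.pv a b t = b := by
  rw [T.pv_eq_right a b (le_trans (T.hgt_le_dist a b) h)]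
  rw [Nat.sub_eq_zero_of_le h]
  rfl

theorem pv_dist_self (a b : V) : T.pv a b (T.dist a b) = b := T.pv_le_dist a b le_rfl

theorem iter_iter (v : V) (m n : ℕ) :
    T.parent^[m] (T.parent^[n] v) = T.parent^[m + n] v :=
  (Function.iterate_add_apply _ _ _ _).symm

theorem anc_pv_pv_left (a b : V) {s t : ℕ} (hst : s ≤ t) (ht : t ≤ T.hgt a b) :
    T.anc (T.pv a b t) (T.pv a b s) := by
  rw [T.pv_eq_left a b ht, T.pv_eq_left a b (le_trans hst ht)]
  exact ⟨t - s, by rw [T.iter_iter]; congr 1; omega⟩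

theorem anc_pv_pv_right (a b : V) {s t : ℕ} (hs : T.hgt a b ≤ s) (hst : s ≤ t)
    (ht : t ≤ T.dist a b) : T.anc (T.pv a b s) (T.pv a b t) := by
  rw [T.pv_eq_right a b hs, T.pv_eq_right a b (le_trans hs hst)]
  exact ⟨(T.dist a b - s) - (T.dist a b - t), by rw [T.iter_iter]; congr 1; omega⟩

theorem anc_pv_a (a b : V) {t : ℕ} (h : t ≤ T.hgt a b) : T.anc (T.pv a b t) a := by
  rw [T.pv_eq_left a b h]; exact ⟨t, rfl⟩

theorem anc_pv_b (a b : V) {t : ℕ} (h1 : T.hgt a b ≤ t) : T.anc (T.pv a b t) b := by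
  rw [T.pv_eq_right a b h1]; exact ⟨_, rfl⟩

theorem pv_lca_left (a b : V) {s t : ℕ} (hs : s ≤ T.hgt a b) (ht : t ≤ T.hgt a b) :
    T.lca (T.pv a b s) (T.pv a b t) = T.pv a b (max s t) := by
  apply T.anc_antisymm
  · rcases le_total s t with h | h
    · rw [max_eq_right h]; exact T.lca_anc_right _ _
    · rw [max_eq_left h]; exact T.lca_anc_left _ _
  · exact T.anc_lca (T.anc_pv_pv_left a b (le_max_left s t) (by omega))
      (T.anc_pv_pv_left a b (le_max_right s t) (by omega))

theorem pv_lca_right (a b : V) {s t : ℕ} (hs : T.hgt a b ≤ s) (ht : T.hgt a b ≤ t)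
    (hs' : s ≤ T.dist a b) (ht' : t ≤ T.dist a b) :
    T.lca (T.pv a b s) (T.pv a b t) = T.pv a b (min s t) := by
  apply T.anc_antisymm
  · rcases le_total s t with h | h
    · rw [min_eq_left h]; exact T.lca_anc_left _ _
    · rw [min_eq_right h]; exact T.lca_anc_right _ _
  · exact T.anc_lca (T.anc_pv_pv_right a b (by omega) (min_le_left s t) hs')
      (T.anc_pv_pv_right a b (by omega) (min_le_right s t) ht')

theorem pv_lca_mid (a b : V) {s t : ℕ} (hs : s ≤ T.hgt a b) (ht : T.hgt a b ≤ t)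
    (ht' : t ≤ T.dist a b) :
    T.lca (T.pv a b s) (T.pv a b t) = T.pv a b (T.hgt a b) := by
  apply T.anc_antisymm
  · rw [T.pv_hgt a b]
    exact T.anc_lca (T.anc_trans (T.lca_anc_left _ _) (T.anc_pv_a a b hs))
      (T.anc_trans (T.lca_anc_right _ _) (T.anc_pv_b a b ht))
  · exact T.anc_lca (T.anc_pv_pv_left a b hs le_rfl)
      (T.anc_pv_pv_right a b le_rfl ht ht')

theorem pv_lca_mid' (a b : V) {s t : ℕ} (ht : t ≤ T.hgt a b) (hs : T.hgt a b ≤ s)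
    (hs' : s ≤ T.dist a b) :
    T.lca (T.pv a b s) (T.pv a b t) = T.pv a b (T.hgt a b) := by
  apply T.anc_antisymm
  · rw [T.pv_hgt a b]
    exact T.anc_lca (T.anc_trans (T.lca_anc_right _ _) (T.anc_pv_a a b ht))
      (T.anc_trans (T.lca_anc_left _ _) (T.anc_pv_b a b hs))
  · exact T.anc_lca (T.anc_pv_pv_right a b le_rfl hs hs')
      (T.anc_pv_pv_left a b ht le_rfl)
theorem pv_dist (a b : V) {s t : ℕ} (hs : s ≤ T.dist a b) (ht : t ≤ T.dist a b) :
    T.dist (T.pv a b s) (T.pv a b t) = (s - t) + (t - s) := by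
  rcases le_total s (T.hgt a b) with cs | cs <;> rcases le_total t (T.hgt a b) with ct | ct
  · have h1 := T.depth_pv_left a b cs
    have h2 := T.depth_pv_left a b ct
    have h3 := T.depth_pv_left a b (max_le cs ct)
    simp only [RTree.dist]
    rw [T.pv_lca_left a b cs ct]
    omega
  · have h1 := T.depth_pv_left a b cs
    have h2 := T.depth_pv_right a b ct ht
    have h3 := T.depth_pv_left a b (le_refl (T.hgt a b))
    have h4 := T.depth_pv_right a b (le_refl (T.hgt a b)) (T.hgt_le_dist a b)
    simp only [RTree.dist]
    rw [T.pv_lca_mid a b cs ct ht]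
    omega
  · have h1 := T.depth_pv_right a b cs hs
    have h2 := T.depth_pv_left a b ct
    have h3 := T.depth_pv_left a b (le_refl (T.hgt a b))
    have h4 := T.depth_pv_right a b (le_refl (T.hgt a b)) (T.hgt_le_dist a b)
    simp only [RTree.dist]
    rw [T.pv_lca_mid' a b ct cs hs]
    omega
  · have h1 := T.depth_pv_right a b cs hs
    have h2 := T.depth_pv_right a b ct ht
    have h3 := T.depth_pv_right a b (le_min cs ct)
      (le_trans (min_le_left s t) hs)
    simp only [RTree.dist]
    rw [T.pv_lca_right a b cs ct hs ht]
    omega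
theorem pv_pathVertex_le (a b : V) {s t d : ℕ} (hst : s ≤ t) (ht : t ≤ T.dist a b)
    (hd : d ≤ t - s) :
    T.pathVertex (T.pv a b s) (T.pv a b t) d = T.pv a b (s + d) := by
  have hs : s ≤ T.dist a b := hst.trans ht
  have hdist := T.pv_dist a b hs ht
  rcases le_total t (T.hgt a b) with ct | ct
  · have cs : s ≤ T.hgt a b := hst.trans ct
    have hlca := T.pv_lca_left a b cs ct
    have hmax : max s t = t := max_eq_right hst
    have h1 := T.depth_pv_left a b cs
    have h2 := T.depth_pv_left a b ct
    rw [hmax] at hlca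
    simp only [RTree.pathVertex]
    rw [hdist, hlca]
    split_ifs with h1' h2'
    · have he : s + d = t := by omega
      rw [he]
    · rw [T.pv_eq_left a b cs, T.pv_eq_left a b (show s + d ≤ T.hgt a b by omega),
        T.iter_iter]
      congr 1; omega
    · exfalso; omega
  · rcases le_total s (T.hgt a b) with cs | cs
    · have hlca := T.pv_lca_mid a b cs ct ht
      have h1 := T.depth_pv_left a b cs
      have h2 := T.depth_pv_right a b ct ht
      have h3 := T.depth_pv_left a b (le_refl (T.hgt a b))
      have h4 := T.depth_pv_right a b (le_refl (T.hgt a b)) (T.hgt_le_dist a b)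
      simp only [RTree.pathVertex]
      rw [hdist, hlca]
      split_ifs with h1' h2'
      · have he : s + d = t := by omega
        rw [he]
      · rw [T.pv_eq_left a b cs, T.pv_eq_left a b (show s + d ≤ T.hgt a b by omega),
          T.iter_iter]
        congr 1; omega
      · rw [T.pv_eq_right a b ct, T.pv_eq_right a b (show T.hgt a b ≤ s + d by omega),
          T.iter_iter]
        congr 1; omega
    · have hlca := T.pv_lca_right a b cs ct hs ht
      have hmin : min s t = s := min_eq_left hst
      have h1 := T.depth_pv_right a b cs hs
      have h2 := T.depth_pv_right a b ct ht
      rw [hmin] at hlca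
      simp only [RTree.pathVertex]
      rw [hdist, hlca]
      split_ifs with h1' h2'
      · have he : s + d = t := by omega
        rw [he]
      · have hd0 : d = 0 := by omega
        subst hd0
        simp
      · rw [T.pv_eq_right a b ct, T.pv_eq_right a b (show T.hgt a b ≤ s + d by omega),
          T.iter_iter]
        congr 1; omega

theorem pv_pathVertex_ge (a b : V) {s t d : ℕ} (hts : t ≤ s) (hs : s ≤ T.dist a b)
    (hd : d ≤ s - t) :
    T.pathVertex (T.pv a b s) (T.pv a b t) d = T.pv a b (s - d) := by
  have ht : t ≤ T.dist a b := hts.trans hs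
  have hdist := T.pv_dist a b hs ht
  rcases le_total s (T.hgt a b) with cs | cs
  · have ct : t ≤ T.hgt a b := hts.trans cs
    have hlca := T.pv_lca_left a b cs ct
    have hmax : max s t = s := max_eq_left hts
    have h1 := T.depth_pv_left a b cs
    have h2 := T.depth_pv_left a b ct
    rw [hmax] at hlca
    simp only [RTree.pathVertex]
    rw [hdist, hlca]
    split_ifs with h1' h2'
    · have he : s - d = t := by omega
      rw [he]
    · have hd0 : d = 0 := by omega
      subst hd0
      simp
    · rw [T.pv_eq_left a b ct, T.pv_eq_left a b (show s - d ≤ T.hgt a b by omega),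
        T.iter_iter]
      congr 1; omega
  · rcases le_total t (T.hgt a b) with ct | ct
    · have hlca := T.pv_lca_mid' a b ct cs hs
      have h1 := T.depth_pv_right a b cs hs
      have h2 := T.depth_pv_left a b ct
      have h3 := T.depth_pv_left a b (le_refl (T.hgt a b))
      have h4 := T.depth_pv_right a b (le_refl (T.hgt a b)) (T.hgt_le_dist a b)
      simp only [RTree.pathVertex]
      rw [hdist, hlca]
      split_ifs with h1' h2'
      · have he : s - d = t := by omega
        rw [he]
      · rw [T.pv_eq_right a b cs, T.pv_eq_right a b (show T.hgt a b ≤ s - d by omega),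
          T.iter_iter]
        congr 1; omega
      · rw [T.pv_eq_left a b ct, T.pv_eq_left a b (show s - d ≤ T.hgt a b by omega),
          T.iter_iter]
        congr 1; omega
    · have hlca := T.pv_lca_right a b cs ct hs ht
      have hmin : min s t = t := min_eq_right hts
      have h1 := T.depth_pv_right a b cs hs
      have h2 := T.depth_pv_right a b ct ht
      rw [hmin] at hlca
      simp only [RTree.pathVertex]
      rw [hdist, hlca]
      split_ifs with h1' h2'
      · have he : s - d = t := by omega
        rw [he]
      · rw [T.pv_eq_right a b cs, T.pv_eq_right a b (show T.hgt a b ≤ s - d by omega),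
          T.iter_iter]
        congr 1; omega
      · exfalso; omega
theorem pv_meet_left (a b : V) {s t : ℕ} (hs : s ≤ T.hgt a b) (ht : t ≤ T.hgt a b) :
    T.meet (T.pv a b s) (T.pv a b t) = T.pv a b (max s t) := T.pv_lca_left a b hs ht

theorem pv_meet_right (a b : V) {s t : ℕ} (hs : T.hgt a b ≤ s) (ht : T.hgt a b ≤ t)
    (hs' : s ≤ T.dist a b) (ht' : t ≤ T.dist a b) :
    T.meet (T.pv a b s) (T.pv a b t) = T.pv a b (min s t) := T.pv_lca_right a b hs ht hs' ht'

theorem pv_meet_mid (a b : V) {s t : ℕ} (hs : s ≤ T.hgt a b) (ht : T.hgt a b ≤ t)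
    (ht' : t ≤ T.dist a b) :
    T.meet (T.pv a b s) (T.pv a b t) = T.pv a b (T.hgt a b) := T.pv_lca_mid a b hs ht ht'

theorem pv_meet_mid' (a b : V) {s t : ℕ} (ht : t ≤ T.hgt a b) (hs : T.hgt a b ≤ s)
    (hs' : s ≤ T.dist a b) :
    T.meet (T.pv a b s) (T.pv a b t) = T.pv a b (T.hgt a b) := T.pv_lca_mid' a b ht hs hs'

theorem pv_join_mid (a b : V) {s t : ℕ} (hs : s ≤ T.hgt a b) (ht : T.hgt a b ≤ t)
    (ht' : t ≤ T.dist a b) :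
    T.join (T.pv a b s) (T.pv a b t) = T.pv a b (s + (t - T.hgt a b)) := by
  have h2 := T.depth_pv_right a b ht ht'
  have h4 := T.depth_pv_right a b (le_refl (T.hgt a b)) (T.hgt_le_dist a b)
  simp only [RTree.join]
  rw [T.pv_lca_mid a b hs ht ht', T.pv_hgt a b]
  have hdd : T.depth (T.pv a b t) - T.depth (T.lca a b) = t - T.hgt a b := by
    rw [← T.pv_hgt a b]; omega
  rw [hdd]
  exact T.pv_pathVertex_le a b (hs.trans ht) ht' (by omega)

theorem pv_join_mid' (a b : V) {s t : ℕ} (ht : t ≤ T.hgt a b) (hs : T.hgt a b ≤ s)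
    (hs' : s ≤ T.dist a b) :
    T.join (T.pv a b s) (T.pv a b t) = T.pv a b (s - (T.hgt a b - t)) := by
  have h2 := T.depth_pv_left a b ht
  have h4 := T.depth_pv_left a b (le_refl (T.hgt a b))
  simp only [RTree.join]
  rw [T.pv_lca_mid' a b ht hs hs', T.pv_hgt a b]
  have hdd : T.depth (T.pv a b t) - T.depth (T.lca a b) = T.hgt a b - t := by
    rw [← T.pv_hgt a b]; omega
  rw [hdd]
  exact T.pv_pathVertex_ge a b (ht.trans hs) hs' (by omega)

theorem pv_join_left (a b : V) {s t : ℕ} (hs : s ≤ T.hgt a b) (ht : t ≤ T.hgt a b) :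
    T.join (T.pv a b s) (T.pv a b t) = T.pv a b (min s t) := by
  have h1 := T.depth_pv_left a b hs
  have h2 := T.depth_pv_left a b ht
  simp only [RTree.join]
  rw [T.pv_lca_left a b hs ht]
  rcases le_total s t with hst | hst
  · rw [max_eq_right hst]
    have hdd : T.depth (T.pv a b t) - T.depth (T.pv a b t) = 0 := by omega
    rw [hdd]
    rw [T.pv_pathVertex_le a b hst (ht.trans (T.hgt_le_dist a b)) (by omega)]
    have he : s + 0 = min s t := by omega
    rw [he]
  · rw [max_eq_left hst]
    have h3 := T.depth_pv_left a b hs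
    have hdd : T.depth (T.pv a b t) - T.depth (T.pv a b s) = s - t := by omega
    rw [hdd]
    rw [T.pv_pathVertex_ge a b hst (hs.trans (T.hgt_le_dist a b)) (by omega)]
    have he : s - (s - t) = min s t := by omega
    rw [he]

theorem pv_join_right (a b : V) {s t : ℕ} (hs : T.hgt a b ≤ s) (ht : T.hgt a b ≤ t)
    (hs' : s ≤ T.dist a b) (ht' : t ≤ T.dist a b) :
    T.join (T.pv a b s) (T.pv a b t) = T.pv a b (max s t) := by
  have h1 := T.depth_pv_right a b hs hs'
  have h2 := T.depth_pv_right a b ht ht'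
  simp only [RTree.join]
  rw [T.pv_lca_right a b hs ht hs' ht']
  rcases le_total s t with hst | hst
  · rw [min_eq_left hst, max_eq_right hst]
    have hdd : T.depth (T.pv a b t) - T.depth (T.pv a b s) = t - s := by omega
    rw [hdd]
    rw [T.pv_pathVertex_le a b hst ht' (by omega)]
    have he : s + (t - s) = t := by omega
    rw [he]
  · rw [min_eq_right hst, max_eq_left hst]
    have hdd : T.depth (T.pv a b t) - T.depth (T.pv a b t) = 0 := by omega
    rw [hdd]
    rw [T.pv_pathVertex_ge a b hst hs' (by omega)]
    have he : s - 0 = s := by omega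
    rw [he]

theorem pv_capcup_ge (a b : V) {s t : ℕ} (hs : s ≤ T.dist a b) (ht : t ≤ T.dist a b)
    (hor : T.hgt a b ≤ (s + t) / 2) :
    T.cap (T.pv a b s) (T.pv a b t) = T.pv a b ((s + t) / 2) ∧
      T.cup (T.pv a b s) (T.pv a b t) = T.pv a b ((s + t) - (s + t) / 2) := by
  have hdist := T.pv_dist a b hs ht
  have hidx : (s + t + 1) / 2 = (s + t) - (s + t) / 2 := by omega
  rcases le_total s t with hst | hst
  · have e1 : T.pathVertex (T.pv a b s) (T.pv a b t) (T.dist (T.pv a b s) (T.pv a b t) / 2)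
        = T.pv a b ((s + t) / 2) := by
      rw [hdist, T.pv_pathVertex_le a b hst ht (show ((s-t)+(t-s))/2 ≤ t - s by omega)]
      have he : s + ((s-t)+(t-s))/2 = (s + t) / 2 := by omega
      rw [he]
    have e2 : T.pathVertex (T.pv a b s) (T.pv a b t)
        ((T.dist (T.pv a b s) (T.pv a b t) + 1) / 2) = T.pv a b ((s + t + 1) / 2) := by
      rw [hdist, T.pv_pathVertex_le a b hst ht (show ((s-t)+(t-s)+1)/2 ≤ t - s by omega)]
      have he : s + ((s-t)+(t-s)+1)/2 = (s + t + 1) / 2 := by omega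
      rw [he]
    have hanc : T.anc (T.pv a b ((s + t) / 2)) (T.pv a b ((s + t + 1) / 2)) := by
      refine T.anc_pv_pv_right a b hor ?_ ?_ <;> omega
    constructor
    · rw [RTree.cap, e1, e2, if_pos hanc]
    · rw [RTree.cup, e1, e2, if_pos hanc, hidx]
  · have e1 : T.pathVertex (T.pv a b s) (T.pv a b t) (T.dist (T.pv a b s) (T.pv a b t) / 2)
        = T.pv a b ((s + t + 1) / 2) := by
      rw [hdist, T.pv_pathVertex_ge a b hst hs (show ((s-t)+(t-s))/2 ≤ s - t by omega)]
      have he : s - ((s-t)+(t-s))/2 = (s + t + 1) / 2 := by omega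
      rw [he]
    have e2 : T.pathVertex (T.pv a b s) (T.pv a b t)
        ((T.dist (T.pv a b s) (T.pv a b t) + 1) / 2) = T.pv a b ((s + t) / 2) := by
      rw [hdist, T.pv_pathVertex_ge a b hst hs (show ((s-t)+(t-s)+1)/2 ≤ s - t by omega)]
      have he : s - ((s-t)+(t-s)+1)/2 = (s + t) / 2 := by omega
      rw [he]
    rcases Nat.even_or_odd (s + t) with hpar | hpar
    · have heq : (s + t + 1) / 2 = (s + t) / 2 := by
        obtain ⟨m, hm⟩ := hpar; omega
      rw [heq] at e1
      have hanc : T.anc (T.pv a b ((s + t) / 2)) (T.pv a b ((s + t) / 2)) := T.anc_refl _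
      constructor
      · rw [RTree.cap, e1, e2, if_pos hanc]
      · rw [RTree.cup, e1, e2, if_pos hanc]
        have he : (s + t) / 2 = (s + t) - (s + t) / 2 := by
          obtain ⟨m, hm⟩ := hpar; omega
        rw [← he]
    · have hanc : ¬ T.anc (T.pv a b ((s + t + 1) / 2)) (T.pv a b ((s + t) / 2)) := by
        intro h
        have hd := h.depth_le
        have hodd : (s + t + 1) / 2 = (s + t) / 2 + 1 := by
          obtain ⟨m, hm⟩ := hpar; omega
        have d1 := T.depth_pv_right a b hor (show (s+t)/2 ≤ T.dist a b by omega)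
        have d2 := T.depth_pv_right a b (show T.hgt a b ≤ (s+t+1)/2 by omega)
          (show (s+t+1)/2 ≤ T.dist a b by omega)
        omega
      constructor
      · rw [RTree.cap, e1, e2, if_neg hanc]
      · rw [RTree.cup, e1, e2, if_neg hanc]
        have he : (s + t + 1) / 2 = (s + t) - (s + t) / 2 := by
          obtain ⟨m, hm⟩ := hpar; omega
        rw [he]

theorem pv_capcup_lt (a b : V) {s t : ℕ} (hs : s ≤ T.dist a b) (ht : t ≤ T.dist a b)
    (hor : (s + t) / 2 < T.hgt a b) :
    T.cap (T.pv a b s) (T.pv a b t) = T.pv a b ((s + t) - (s + t) / 2) ∧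
      T.cup (T.pv a b s) (T.pv a b t) = T.pv a b ((s + t) / 2) := by
  have hdist := T.pv_dist a b hs ht
  have hub : (s + t + 1) / 2 ≤ T.hgt a b := by omega
  rcases le_total s t with hst | hst
  · have e1 : T.pathVertex (T.pv a b s) (T.pv a b t) (T.dist (T.pv a b s) (T.pv a b t) / 2)
        = T.pv a b ((s + t) / 2) := by
      rw [hdist, T.pv_pathVertex_le a b hst ht (show ((s-t)+(t-s))/2 ≤ t - s by omega)]
      have he : s + ((s-t)+(t-s))/2 = (s + t) / 2 := by omega
      rw [he]
    have e2 : T.pathVertex (T.pv a b s) (T.pv a b t)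
        ((T.dist (T.pv a b s) (T.pv a b t) + 1) / 2) = T.pv a b ((s + t + 1) / 2) := by
      rw [hdist, T.pv_pathVertex_le a b hst ht (show ((s-t)+(t-s)+1)/2 ≤ t - s by omega)]
      have he : s + ((s-t)+(t-s)+1)/2 = (s + t + 1) / 2 := by omega
      rw [he]
    rcases Nat.even_or_odd (s + t) with hpar | hpar
    · have heq : (s + t + 1) / 2 = (s + t) / 2 := by
        obtain ⟨m, hm⟩ := hpar; omega
      rw [heq] at e2
      have hanc : T.anc (T.pv a b ((s + t) / 2)) (T.pv a b ((s + t) / 2)) := T.anc_refl _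
      constructor
      · rw [RTree.cap, e1, e2, if_pos hanc]
        have he : (s + t) / 2 = (s + t) - (s + t) / 2 := by
          obtain ⟨m, hm⟩ := hpar; omega
        rw [← he]
      · rw [RTree.cup, e1, e2, if_pos hanc]
    · have hodd : (s + t + 1) / 2 = (s + t) / 2 + 1 := by
        obtain ⟨m, hm⟩ := hpar; omega
      have hanc : ¬ T.anc (T.pv a b ((s + t) / 2)) (T.pv a b ((s + t + 1) / 2)) := by
        intro h
        have hd := h.depth_le
        have d1 := T.depth_pv_left a b (le_of_lt hor)
        have d2 := T.depth_pv_left a b hub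
        omega
      constructor
      · rw [RTree.cap, e1, e2, if_neg hanc]
        have he : (s + t + 1) / 2 = (s + t) - (s + t) / 2 := by
          obtain ⟨m, hm⟩ := hpar; omega
        rw [he]
      · rw [RTree.cup, e1, e2, if_neg hanc]
  · have e1 : T.pathVertex (T.pv a b s) (T.pv a b t) (T.dist (T.pv a b s) (T.pv a b t) / 2)
        = T.pv a b ((s + t + 1) / 2) := by
      rw [hdist, T.pv_pathVertex_ge a b hst hs (show ((s-t)+(t-s))/2 ≤ s - t by omega)]
      have he : s - ((s-t)+(t-s))/2 = (s + t + 1) / 2 := by omega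
      rw [he]
    have e2 : T.pathVertex (T.pv a b s) (T.pv a b t)
        ((T.dist (T.pv a b s) (T.pv a b t) + 1) / 2) = T.pv a b ((s + t) / 2) := by
      rw [hdist, T.pv_pathVertex_ge a b hst hs (show ((s-t)+(t-s)+1)/2 ≤ s - t by omega)]
      have he : s - ((s-t)+(t-s)+1)/2 = (s + t) / 2 := by omega
      rw [he]
    have hanc : T.anc (T.pv a b ((s + t + 1) / 2)) (T.pv a b ((s + t) / 2)) := by
      refine T.anc_pv_pv_left a b ?_ hub
      omega
    constructor
    · rw [RTree.cap, e1, e2, if_pos hanc]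
      have he : (s + t + 1) / 2 = (s + t) - (s + t) / 2 := by omega
      rw [he]
    · rw [RTree.cup, e1, e2, if_pos hanc]
theorem pv_meet_join (a b : V) {s t m : ℕ} (hs : s ≤ T.dist a b) (ht : t ≤ T.dist a b)
    (hm : (s ≤ T.hgt a b ∧ t ≤ T.hgt a b ∧ m = max s t) ∨
          (T.hgt a b ≤ s ∧ T.hgt a b ≤ t ∧ m = min s t) ∨
          (s ≤ T.hgt a b ∧ T.hgt a b ≤ t ∧ m = T.hgt a b) ∨
          (t ≤ T.hgt a b ∧ T.hgt a b ≤ s ∧ m = T.hgt a b)) :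
    T.meet (T.pv a b s) (T.pv a b t) = T.pv a b m ∧
      T.join (T.pv a b s) (T.pv a b t) = T.pv a b (s + t - m) := by
  rcases hm with ⟨h1, h2, h3⟩ | ⟨h1, h2, h3⟩ | ⟨h1, h2, h3⟩ | ⟨h1, h2, h3⟩
  · subst h3
    refine ⟨T.pv_meet_left a b h1 h2, ?_⟩
    rw [T.pv_join_left a b h1 h2]
    have he : min s t = s + t - max s t := by omega
    rw [← he]
  · subst h3
    refine ⟨T.pv_meet_right a b h1 h2 hs ht, ?_⟩
    rw [T.pv_join_right a b h1 h2 hs ht]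
    have he : max s t = s + t - min s t := by omega
    rw [← he]
  · subst h3
    refine ⟨T.pv_meet_mid a b h1 h2 ht, ?_⟩
    rw [T.pv_join_mid a b h1 h2 ht]
    have he : s + (t - T.hgt a b) = s + t - T.hgt a b := by omega
    rw [he]
  · subst h3
    refine ⟨T.pv_meet_mid' a b h1 h2 hs, ?_⟩
    rw [T.pv_join_mid' a b h1 h2 hs]
    have he : s - (T.hgt a b - t) = s + t - T.hgt a b := by omega
    rw [he]

theorem pv_cap_cup (a b : V) {s t c : ℕ} (hs : s ≤ T.dist a b) (ht : t ≤ T.dist a b)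
    (hc : (T.hgt a b ≤ (s + t) / 2 ∧ c = (s + t) / 2) ∨
          ((s + t) / 2 < T.hgt a b ∧ c = (s + t) - (s + t) / 2)) :
    T.cap (T.pv a b s) (T.pv a b t) = T.pv a b c ∧
      T.cup (T.pv a b s) (T.pv a b t) = T.pv a b (s + t - c) := by
  rcases hc with ⟨h1, h2⟩ | ⟨h1, h2⟩
  · subst h2
    exact T.pv_capcup_ge a b hs ht h1
  · subst h2
    obtain ⟨e1, e2⟩ := T.pv_capcup_lt a b hs ht h1
    refine ⟨e1, ?_⟩
    rw [e2]
    have he : (s + t) / 2 = s + t - (s + t - (s + t) / 2) := by omega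
    rw [← he]

theorem meet_eq_pv (a b : V) : T.meet a b = T.pv a b (T.hgt a b) := by
  have := (T.pv_meet_join a b (s := 0) (t := T.dist a b) (m := T.hgt a b)
    (by omega) le_rfl (by
      right; right; left
      exact ⟨Nat.zero_le _, T.hgt_le_dist a b, rfl⟩)).1
  rwa [T.pv_zero a b, T.pv_dist_self a b] at this

theorem join_eq_pv (a b : V) : T.join a b = T.pv a b (T.dist a b - T.hgt a b) := by
  have := (T.pv_meet_join a b (s := 0) (t := T.dist a b) (m := T.hgt a b)
    (by omega) le_rfl (by
      right; right; left
      exact ⟨Nat.zero_le _, T.hgt_le_dist a b, rfl⟩)).2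
  rwa [T.pv_zero a b, T.pv_dist_self a b, Nat.zero_add] at this

theorem cap_eq_pv (a b : V) {c : ℕ}
    (hc : (T.hgt a b ≤ T.dist a b / 2 ∧ c = T.dist a b / 2) ∨
          (T.dist a b / 2 < T.hgt a b ∧ c = T.dist a b - T.dist a b / 2)) :
    T.cap a b = T.pv a b c ∧ T.cup a b = T.pv a b (T.dist a b - c) := by
  have := T.pv_cap_cup a b (s := 0) (t := T.dist a b) (c := c) (by omega) le_rfl
    (by simpa using hc)
  rwa [T.pv_zero a b, T.pv_dist_self a b, Nat.zero_add] at this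

end RTree


section Product

variable {ι : Type*} {V : ι → Type*}

/-- `f` is strongly tree-submodular w.r.t. the trees `T i`:
`f(x) + f(y) ≥ f(x ⊓ y) + f(x ⊔ y)`, the operations acting componentwise. -/
def StronglyTreeSubmodular (T : ∀ i, RTree (V i)) (f : (∀ i, V i) → ℝ) : Prop :=
  ∀ x y : ∀ i, V i,
    f (fun i => (T i).cap (x i) (y i)) + f (fun i => (T i).cup (x i) (y i)) ≤ f x + f y

/-- `INWARD(x) = { y ∈ NEIB(x) : y ⪯ x }`, where `NEIB(x) = {y : max_i ρ(x_i,y_i) ≤ 1}`. -/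
def inward (T : ∀ i, RTree (V i)) (x : ∀ i, V i) : Set (∀ i, V i) :=
  {y | (∀ i, (T i).dist (x i) (y i) ≤ 1) ∧ ∀ i, (T i).anc (y i) (x i)}

/-- `OUTWARD(x) = { y ∈ NEIB(x) : x ⪯ y }`. -/
def outward (T : ∀ i, RTree (V i)) (x : ∀ i, V i) : Set (∀ i, V i) :=
  {y | (∀ i, (T i).dist (x i) (y i) ≤ 1) ∧ ∀ i, (T i).anc (x i) (y i)}

end Product

/-- Every strongly tree-submodular function is weakly tree-submodular:
`f(x) + f(y) ≥ f(x ∧ y) + f(x ∨ y)` for all `x, y`. -/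
theorem strong_implies_weak_tree_submodularity {ι : Type*} [Fintype ι] {V : ι → Type*}
    [∀ i, Fintype (V i)] (T : ∀ i, RTree (V i)) (f : (∀ i, V i) → ℝ)
    (hf : StronglyTreeSubmodular T f) :
    ∀ x y : ∀ i, V i,
      f (fun i => (T i).meet (x i) (y i)) + f (fun i => (T i).join (x i) (y i)) ≤
        f x + f y := by
  classical
  suffices H : ∀ N : ℕ, ∀ x y : ∀ i, V i, (∑ i, (T i).dist (x i) (y i)) = N →
      f (fun i => (T i).meet (x i) (y i)) + f (fun i => (T i).join (x i) (y i)) ≤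
        f x + f y by
    intro x y; exact H _ x y rfl
  intro N
  induction N using Nat.strong_induction_on with
  | _ N IH =>
    intro x y hN
    -- notation facts
    have hhR : ∀ i, (T i).hgt (x i) (y i) ≤ (T i).dist (x i) (y i) := fun i =>
      (T i).hgt_le_dist _ _
    -- rewrite goal into pv form
    have hMJ : (fun i => (T i).meet (x i) (y i)) =
        (fun i => (T i).pv (x i) (y i) ((T i).hgt (x i) (y i))) :=
      funext fun i => (T i).meet_eq_pv _ _
    have hJN : (fun i => (T i).join (x i) (y i)) =
        (fun i => (T i).pv (x i) (y i) ((T i).dist (x i) (y i) - (T i).hgt (x i) (y i))) :=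
      funext fun i => (T i).join_eq_pv _ _
    rw [hMJ, hJN]
    have hX : (fun i => (T i).pv (x i) (y i) 0) = x := funext fun i => (T i).pv_zero _ _
    have hY : (fun i => (T i).pv (x i) (y i) ((T i).dist (x i) (y i))) = y :=
      funext fun i => (T i).pv_dist_self _ _
    -- helper : weak submodularity instances from the induction hypothesis
    have WEAK : ∀ u w m j : ι → ℕ,
        (∀ i, u i ≤ (T i).dist (x i) (y i) ∧ w i ≤ (T i).dist (x i) (y i) ∧
          j i = u i + w i - m i ∧
          ((u i ≤ (T i).hgt (x i) (y i) ∧ w i ≤ (T i).hgt (x i) (y i) ∧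
              m i = max (u i) (w i)) ∨
           ((T i).hgt (x i) (y i) ≤ u i ∧ (T i).hgt (x i) (y i) ≤ w i ∧
              m i = min (u i) (w i)) ∨
           (u i ≤ (T i).hgt (x i) (y i) ∧ (T i).hgt (x i) (y i) ≤ w i ∧
              m i = (T i).hgt (x i) (y i)) ∨
           (w i ≤ (T i).hgt (x i) (y i) ∧ (T i).hgt (x i) (y i) ≤ u i ∧
              m i = (T i).hgt (x i) (y i)))) →
        (∑ i, ((u i - w i) + (w i - u i))) < N →
        f (fun i => (T i).pv (x i) (y i) (m i)) + f (fun i => (T i).pv (x i) (y i) (j i)) ≤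
          f (fun i => (T i).pv (x i) (y i) (u i)) +
            f (fun i => (T i).pv (x i) (y i) (w i)) := by
      intro u w m j hcond hlt
      have hsum : ∑ i, (T i).dist ((T i).pv (x i) (y i) (u i)) ((T i).pv (x i) (y i) (w i))
          = ∑ i, ((u i - w i) + (w i - u i)) :=
        Finset.sum_congr rfl fun i _ => (T i).pv_dist _ _ (hcond i).1 (hcond i).2.1
      have hmain := IH _ (lt_of_le_of_lt (le_of_eq hsum) hlt)
        (fun i => (T i).pv (x i) (y i) (u i)) (fun i => (T i).pv (x i) (y i) (w i)) rfl
      have hmeq : (fun i => (T i).meet ((T i).pv (x i) (y i) (u i))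
          ((T i).pv (x i) (y i) (w i))) = fun i => (T i).pv (x i) (y i) (m i) :=
        funext fun i =>
          ((T i).pv_meet_join (x i) (y i) (hcond i).1 (hcond i).2.1 (hcond i).2.2.2).1
      have hjeq : (fun i => (T i).join ((T i).pv (x i) (y i) (u i))
          ((T i).pv (x i) (y i) (w i))) = fun i => (T i).pv (x i) (y i) (j i) :=
        funext fun i => by
          rw [(hcond i).2.2.1]
          exact ((T i).pv_meet_join (x i) (y i) (hcond i).1 (hcond i).2.1 (hcond i).2.2.2).2
      rw [hmeq, hjeq] at hmain
      exact hmain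
    -- helper : strong submodularity instances
    have STRONG : ∀ u w c e : ι → ℕ,
        (∀ i, u i ≤ (T i).dist (x i) (y i) ∧ w i ≤ (T i).dist (x i) (y i) ∧
          e i = u i + w i - c i ∧
          (((T i).hgt (x i) (y i) ≤ (u i + w i) / 2 ∧ c i = (u i + w i) / 2) ∨
           ((u i + w i) / 2 < (T i).hgt (x i) (y i) ∧
              c i = (u i + w i) - (u i + w i) / 2))) →
        f (fun i => (T i).pv (x i) (y i) (c i)) + f (fun i => (T i).pv (x i) (y i) (e i)) ≤
          f (fun i => (T i).pv (x i) (y i) (u i)) +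
            f (fun i => (T i).pv (x i) (y i) (w i)) := by
      intro u w c e hcond
      have hmain := hf (fun i => (T i).pv (x i) (y i) (u i))
        (fun i => (T i).pv (x i) (y i) (w i))
      have hceq : (fun i => (T i).cap ((T i).pv (x i) (y i) (u i))
          ((T i).pv (x i) (y i) (w i))) = fun i => (T i).pv (x i) (y i) (c i) :=
        funext fun i =>
          ((T i).pv_cap_cup (x i) (y i) (hcond i).1 (hcond i).2.1 (hcond i).2.2.2).1
      have heeq : (fun i => (T i).cup ((T i).pv (x i) (y i) (u i))
          ((T i).pv (x i) (y i) (w i))) = fun i => (T i).pv (x i) (y i) (e i) :=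
        funext fun i => by
          rw [(hcond i).2.2.1]
          exact ((T i).pv_cap_cup (x i) (y i) (hcond i).1 (hcond i).2.1 (hcond i).2.2.2).2
      rw [hceq, heeq] at hmain
      exact hmain
    by_cases hbase : ∀ i, (T i).dist (x i) (y i) ≤ 1
    · -- base case : componentwise distance ≤ 1, a single strong instance suffices
      have hmain := hf x y
      have hceq : (fun i => (T i).cap (x i) (y i)) =
          fun i => (T i).pv (x i) (y i) ((T i).hgt (x i) (y i)) :=
        funext fun i => ((T i).cap_eq_pv (x i) (y i)
          (c := (T i).hgt (x i) (y i)) (by have := hhR i; have := hbase i; omega)).1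
      have heeq : (fun i => (T i).cup (x i) (y i)) =
          fun i => (T i).pv (x i) (y i)
            ((T i).dist (x i) (y i) - (T i).hgt (x i) (y i)) := by
        refine funext fun i => ?_
        have h2 := ((T i).cap_eq_pv (x i) (y i)
          (c := (T i).hgt (x i) (y i)) (by have := hhR i; have := hbase i; omega)).2
        exact h2
      rw [hceq, heeq] at hmain
      exact hmain
    · push_neg at hbase
      obtain ⟨i0, hI0'⟩ := hbase
      have hI0 : 2 ≤ (T i0).dist (x i0) (y i0) := hI0'
      by_cases hcomp : ∀ i, (T i).hgt (x i) (y i) = 0 ∨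
          (T i).hgt (x i) (y i) = (T i).dist (x i) (y i)
      · -- the all-comparable case
        have hGsum : (∑ i, ((if (T i).hgt (x i) (y i) = 0 then (T i).dist (x i) (y i) else 0) +
            (if (T i).hgt (x i) (y i) = 0 then 0 else (T i).dist (x i) (y i)))) = N := by
          rw [← hN]
          refine Finset.sum_congr rfl fun i _ => ?_
          split_ifs <;> omega
        rw [Finset.sum_add_distrib] at hGsum
        by_cases hSg : (∑ i, if (T i).hgt (x i) (y i) = 0 then (T i).dist (x i) (y i) else 0) = 0
        · -- meet = y, join = x : trivial
          have hz := Finset.sum_eq_zero_iff.mp hSg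
          have e1 : (fun i => (T i).pv (x i) (y i) ((T i).hgt (x i) (y i))) = y := by
            refine funext fun i => ?_
            have hzi := hz i (Finset.mem_univ i)
            have hcompi := hcomp i
            have hgd : (T i).hgt (x i) (y i) = (T i).dist (x i) (y i) := by
              rcases hcompi with h' | h'
              · rw [h'] at hzi ⊢
                simp at hzi
                omega
              · exact h'
            rw [hgd]
            exact (T i).pv_dist_self _ _
          have e2 : (fun i => (T i).pv (x i) (y i)
              ((T i).dist (x i) (y i) - (T i).hgt (x i) (y i))) = x := by
            refine funext fun i => ?_
            have hzi := hz i (Finset.mem_univ i)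
            have hcompi := hcomp i
            have hgd : (T i).dist (x i) (y i) - (T i).hgt (x i) (y i) = 0 := by
              rcases hcompi with h' | h'
              · rw [h'] at hzi ⊢
                simp at hzi
                omega
              · omega
            rw [hgd]
            exact (T i).pv_zero _ _
          rw [e1, e2]
          linarith
        · by_cases hSb : (∑ i, if (T i).hgt (x i) (y i) = 0 then 0 else (T i).dist (x i) (y i)) = 0
          · -- meet = x, join = y : trivial
            have hz := Finset.sum_eq_zero_iff.mp hSb
            have hG0 : ∀ i, (T i).hgt (x i) (y i) = 0 := by
              intro i
              have hzi := hz i (Finset.mem_univ i)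
              have := hhR i
              rcases hcomp i with h' | h'
              · exact h'
              · split_ifs at hzi with hh
                · exact hh
                · omega
            have e1 : (fun i => (T i).pv (x i) (y i) ((T i).hgt (x i) (y i))) = x := by
              refine funext fun i => ?_
              rw [hG0 i]
              exact (T i).pv_zero _ _
            have e2 : (fun i => (T i).pv (x i) (y i)
                ((T i).dist (x i) (y i) - (T i).hgt (x i) (y i))) = y := by
              refine funext fun i => ?_
              rw [hG0 i, Nat.sub_zero]
              exact (T i).pv_dist_self _ _
            rw [e1, e2]
          · by_cases hSg2 : 2 ≤ ∑ i, if (T i).hgt (x i) (y i) = 0 then (T i).dist (x i) (y i) else 0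
            · -- scheme C1
              obtain ⟨j, hj0, hjD⟩ : ∃ j, (T j).hgt (x j) (y j) = 0 ∧ 0 < (T j).dist (x j) (y j) := by
                by_contra hno
                push_neg at hno
                apply hSg
                refine Finset.sum_eq_zero fun i _ => ?_
                split_ifs with hh
                · have := hno i hh; omega
                · rfl
              have hw2 : ∃ jw, (((if jw = j then (T jw).dist (x jw) (y jw) - 1
                    else (T jw).dist (x jw) (y jw) - (T jw).hgt (x jw) (y jw)) -
                    (T jw).dist (x jw) (y jw)) +
                  ((T jw).dist (x jw) (y jw) -
                    (if jw = j then (T jw).dist (x jw) (y jw) - 1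
                    else (T jw).dist (x jw) (y jw) - (T jw).hgt (x jw) (y jw)))) <
                  (T jw).dist (x jw) (y jw) := by
                by_cases hDj2 : 2 ≤ (T j).dist (x j) (y j)
                · refine ⟨j, ?_⟩
                  rw [if_pos rfl]
                  omega
                · have hsplit := Finset.sum_erase_add Finset.univ
                    (fun i => if (T i).hgt (x i) (y i) = 0 then (T i).dist (x i) (y i) else 0)
                    (Finset.mem_univ j)
                  beta_reduce at hsplit
                  have htj : (if (T j).hgt (x j) (y j) = 0 then (T j).dist (x j) (y j) else 0) ≤ 1 := by
                    split_ifs <;> omega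
                  have hpos : 0 < ∑ i ∈ Finset.univ.erase j,
                      (if (T i).hgt (x i) (y i) = 0 then (T i).dist (x i) (y i) else 0) := by
                    omega
                  obtain ⟨j', hj'mem, hj'pos⟩ : ∃ j' ∈ Finset.univ.erase j,
                      0 < (if (T j').hgt (x j') (y j') = 0 then (T j').dist (x j') (y j') else 0) := by
                    by_contra hno
                    push_neg at hno
                    have : (∑ i ∈ Finset.univ.erase j,
                        (if (T i).hgt (x i) (y i) = 0 then (T i).dist (x i) (y i) else 0)) = 0 :=
                      Finset.sum_eq_zero fun i hi => by have := hno i hi; omega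
                    omega
                  have hj'ne : j' ≠ j := Finset.ne_of_mem_erase hj'mem
                  refine ⟨j', ?_⟩
                  rw [if_neg hj'ne]
                  split_ifs at hj'pos with hg'
                  · rw [hg']
                    omega
                  · omega
              obtain ⟨jw, hjw⟩ := hw2
              have h1 := WEAK (fun _ => 0)
                (fun i => if i = j then (T i).dist (x i) (y i) - 1 else (T i).dist (x i) (y i))
                (fun i => (T i).hgt (x i) (y i))
                (fun i => if i = j then (T i).dist (x i) (y i) - 1 else (T i).dist (x i) (y i) - (T i).hgt (x i) (y i))
                (by
                  intro i
                  have hhRi := hhR i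
                  have hcompi := hcomp i
                  try dsimp only
                  by_cases hij : i = j
                  · subst hij
                    rw [if_pos rfl, if_pos rfl]
                    omega
                  · rw [if_neg hij, if_neg hij]
                    omega)
                (by
                  rw [← hN]
                  refine Finset.sum_lt_sum (fun i _ => ?_) ⟨j, Finset.mem_univ j, ?_⟩
                  · have hhRi := hhR i
                    have hcompi := hcomp i
                    try dsimp only
                    rcases eq_or_ne i j with hij | hij
                    · subst hij
                      rw [if_pos rfl]
                      omega
                    · rw [if_neg hij]
                      omega
                  · have hhRi := hhR j
                    try dsimp only
                    rw [if_pos rfl]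
                    omega)
              have h2 := WEAK (fun i => if i = j then (T i).dist (x i) (y i) - 1 else (T i).dist (x i) (y i) - (T i).hgt (x i) (y i))
                (fun i => (T i).dist (x i) (y i))
                (fun i => if i = j then (T i).dist (x i) (y i) - 1 else (T i).dist (x i) (y i))
                (fun i => (T i).dist (x i) (y i) - (T i).hgt (x i) (y i))
                (by
                  intro i
                  have hhRi := hhR i
                  have hcompi := hcomp i
                  try dsimp only
                  by_cases hij : i = j
                  · subst hij
                    rw [if_pos rfl, if_pos rfl]
                    omega
                  · rw [if_neg hij, if_neg hij]
                    omega)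
                (by
                  rw [← hN]
                  refine Finset.sum_lt_sum (fun i _ => ?_) ⟨jw, Finset.mem_univ jw, ?_⟩
                  · have hhRi := hhR i
                    have hcompi := hcomp i
                    try dsimp only
                    rcases eq_or_ne i j with hij | hij
                    · subst hij
                      rw [if_pos rfl]
                      omega
                    · rw [if_neg hij]
                      omega
                  · have hhRi := hhR jw
                    try dsimp only
                    exact hjw)
              beta_reduce at h1 h2
              rw [hX] at h1
              rw [hY] at h2
              linarith
            · -- scheme C2 ; here the γ-sum is exactly 1 and i0 is a β coordinate
              have hGi0 : (T i0).hgt (x i0) (y i0) = (T i0).dist (x i0) (y i0) := by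
                rcases hcomp i0 with h' | h'
                · exfalso
                  apply hSg2
                  calc (2:ℕ) ≤ (T i0).dist (x i0) (y i0) := hI0
                  _ = (if (T i0).hgt (x i0) (y i0) = 0 then (T i0).dist (x i0) (y i0) else 0) := by rw [if_pos h']
                  _ ≤ ∑ i, if (T i).hgt (x i) (y i) = 0 then (T i).dist (x i) (y i) else 0 :=
                      Finset.single_le_sum
                        (f := fun i => if (T i).hgt (x i) (y i) = 0
                          then (T i).dist (x i) (y i) else 0)
                        (fun i _ => Nat.zero_le _) (Finset.mem_univ i0)
                · exact h'
              have h1 := WEAK (fun i => if i = i0 then 1 else 0)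
                (fun i => (T i).dist (x i) (y i))
                (fun i => (T i).hgt (x i) (y i))
                (fun i => if i = i0 then 1 else (T i).dist (x i) (y i) - (T i).hgt (x i) (y i))
                (by
                  intro i
                  have hhRi := hhR i
                  have hcompi := hcomp i
                  try dsimp only
                  by_cases hij : i = i0
                  · subst hij
                    rw [if_pos rfl, if_pos rfl]
                    omega
                  · rw [if_neg hij, if_neg hij]
                    omega)
                (by
                  rw [← hN]
                  refine Finset.sum_lt_sum (fun i _ => ?_) ⟨i0, Finset.mem_univ i0, ?_⟩
                  · have hhRi := hhR i
                    have hcompi := hcomp i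
                    try dsimp only
                    rcases eq_or_ne i i0 with hij | hij
                    · subst hij
                      rw [if_pos rfl]
                      omega
                    · rw [if_neg hij]
                      omega
                  · have hhRi := hhR i0
                    try dsimp only
                    rw [if_pos rfl]
                    omega)
              have h2 := WEAK (fun _ => 0)
                (fun i => if i = i0 then 1 else (T i).dist (x i) (y i) - (T i).hgt (x i) (y i))
                (fun i => if i = i0 then 1 else 0)
                (fun i => (T i).dist (x i) (y i) - (T i).hgt (x i) (y i))
                (by
                  intro i
                  have hhRi := hhR i
                  have hcompi := hcomp i
                  try dsimp only
                  by_cases hij : i = i0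
                  · subst hij
                    rw [if_pos rfl, if_pos rfl]
                    omega
                  · rw [if_neg hij, if_neg hij]
                    omega)
                (by
                  rw [← hN]
                  refine Finset.sum_lt_sum (fun i _ => ?_) ⟨i0, Finset.mem_univ i0, ?_⟩
                  · have hhRi := hhR i
                    have hcompi := hcomp i
                    try dsimp only
                    rcases eq_or_ne i i0 with hij | hij
                    · subst hij
                      rw [if_pos rfl]
                      omega
                    · rw [if_neg hij]
                      omega
                  · have hhRi := hhR i0
                    try dsimp only
                    rw [if_pos rfl]
                    omega)
              beta_reduce at h1 h2
              rw [hY] at h1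
              rw [hX] at h2
              linarith
      · -- main case
        push_neg at hcomp
        obtain ⟨i1, hI1a, hI1b⟩ := hcomp
        have h1 := WEAK (fun _ => 0)
          (fun i => if 2 * (T i).hgt (x i) (y i) + 2 ≤ (T i).dist (x i) (y i) then (T i).dist (x i) (y i) - (T i).hgt (x i) (y i) - 1 else 0)
          (fun i => if 2 * (T i).hgt (x i) (y i) + 2 ≤ (T i).dist (x i) (y i) then (T i).hgt (x i) (y i) else 0)
          (fun i => if 2 * (T i).hgt (x i) (y i) + 2 ≤ (T i).dist (x i) (y i) then (T i).dist (x i) (y i) - 2 * (T i).hgt (x i) (y i) - 1 else 0)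
          (by
        intro i
        have hhRi := hhR i
        try dsimp only
        split_ifs <;> omega)
          (by
        rw [← hN]
        refine Finset.sum_lt_sum (fun i _ => ?_) ⟨i0, Finset.mem_univ i0, ?_⟩
        · have hhRi := hhR i
          try dsimp only
          split_ifs <;> omega
        · have hhRi := hhR i0
          have h2' := hI0
          try dsimp only
          split_ifs <;> omega)
        have h2 := STRONG (fun i => if 2 * (T i).hgt (x i) (y i) + 2 ≤ (T i).dist (x i) (y i) then (T i).dist (x i) (y i) - 2 * (T i).hgt (x i) (y i) - 1 else 0)
          (fun i => if 2 * (T i).hgt (x i) (y i) ≤ (T i).dist (x i) (y i) then (T i).dist (x i) (y i) else 0)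
          (fun i => if 2 * (T i).hgt (x i) (y i) + 2 ≤ (T i).dist (x i) (y i) then (T i).dist (x i) (y i) - (T i).hgt (x i) (y i) - 1 else if 2 * (T i).hgt (x i) (y i) ≤ (T i).dist (x i) (y i) then (T i).hgt (x i) (y i) else 0)
          (fun i => if 2 * (T i).hgt (x i) (y i) ≤ (T i).dist (x i) (y i) then (T i).dist (x i) (y i) - (T i).hgt (x i) (y i) else 0)
          (by
        intro i
        have hhRi := hhR i
        try dsimp only
        split_ifs <;> omega)
        have h3 := WEAK (fun i => if 2 * (T i).hgt (x i) (y i) + 2 ≤ (T i).dist (x i) (y i) then (T i).hgt (x i) (y i) else 0)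
          (fun i => if 2 * (T i).hgt (x i) (y i) + 2 ≤ (T i).dist (x i) (y i) then (T i).dist (x i) (y i) - (T i).hgt (x i) (y i) - 1 else if 2 * (T i).hgt (x i) (y i) ≤ (T i).dist (x i) (y i) then (T i).hgt (x i) (y i) else 0)
          (fun i => if 2 * (T i).hgt (x i) (y i) ≤ (T i).dist (x i) (y i) then (T i).hgt (x i) (y i) else 0)
          (fun i => if 2 * (T i).hgt (x i) (y i) + 2 ≤ (T i).dist (x i) (y i) then (T i).dist (x i) (y i) - (T i).hgt (x i) (y i) - 1 else 0)
          (by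
        intro i
        have hhRi := hhR i
        try dsimp only
        split_ifs <;> omega)
          (by
        rw [← hN]
        refine Finset.sum_lt_sum (fun i _ => ?_) ⟨i0, Finset.mem_univ i0, ?_⟩
        · have hhRi := hhR i
          try dsimp only
          split_ifs <;> omega
        · have hhRi := hhR i0
          have h2' := hI0
          try dsimp only
          split_ifs <;> omega)
        have h4 := WEAK (fun i => if 2 * (T i).hgt (x i) (y i) ≤ (T i).dist (x i) (y i) then (T i).dist (x i) (y i) else (T i).dist (x i) (y i) - (T i).hgt (x i) (y i) + 1)
          (fun i => (T i).dist (x i) (y i))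
          (fun i => if 2 * (T i).hgt (x i) (y i) ≤ (T i).dist (x i) (y i) then (T i).dist (x i) (y i) else (T i).hgt (x i) (y i))
          (fun i => if 2 * (T i).hgt (x i) (y i) ≤ (T i).dist (x i) (y i) then (T i).dist (x i) (y i) else 2 * ((T i).dist (x i) (y i) - (T i).hgt (x i) (y i)) + 1)
          (by
        intro i
        have hhRi := hhR i
        try dsimp only
        split_ifs <;> omega)
          (by
        rw [← hN]
        refine Finset.sum_lt_sum (fun i _ => ?_) ⟨i0, Finset.mem_univ i0, ?_⟩
        · have hhRi := hhR i
          try dsimp only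
          split_ifs <;> omega
        · have hhRi := hhR i0
          have h2' := hI0
          try dsimp only
          split_ifs <;> omega)
        have h5 := STRONG (fun i => if 2 * (T i).hgt (x i) (y i) ≤ (T i).dist (x i) (y i) then (T i).dist (x i) (y i) else 0)
          (fun i => if 2 * (T i).hgt (x i) (y i) ≤ (T i).dist (x i) (y i) then (T i).dist (x i) (y i) else 2 * ((T i).dist (x i) (y i) - (T i).hgt (x i) (y i)) + 1)
          (fun i => if 2 * (T i).hgt (x i) (y i) ≤ (T i).dist (x i) (y i) then (T i).dist (x i) (y i) else (T i).dist (x i) (y i) - (T i).hgt (x i) (y i) + 1)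
          (fun i => if 2 * (T i).hgt (x i) (y i) ≤ (T i).dist (x i) (y i) then (T i).dist (x i) (y i) else (T i).dist (x i) (y i) - (T i).hgt (x i) (y i))
          (by
        intro i
        have hhRi := hhR i
        try dsimp only
        split_ifs <;> omega)
        have h6 := WEAK (fun i => if 2 * (T i).hgt (x i) (y i) ≤ (T i).dist (x i) (y i) then (T i).dist (x i) (y i) else (T i).hgt (x i) (y i))
          (fun i => if 2 * (T i).hgt (x i) (y i) ≤ (T i).dist (x i) (y i) then (T i).hgt (x i) (y i) else 0)
          (fun i => (T i).hgt (x i) (y i))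
          (fun i => if 2 * (T i).hgt (x i) (y i) ≤ (T i).dist (x i) (y i) then (T i).dist (x i) (y i) else 0)
          (by
        intro i
        have hhRi := hhR i
        try dsimp only
        split_ifs <;> omega)
          (by
        rw [← hN]
        refine Finset.sum_lt_sum (fun i _ => ?_) ⟨i1, Finset.mem_univ i1, ?_⟩
        · have hhRi := hhR i
          try dsimp only
          split_ifs <;> omega
        · have hhRi := hhR i1
          have ha := hI1a
          have hb := hI1b
          try dsimp only
          split_ifs <;> omega)
        have h7 := WEAK (fun i => if 2 * (T i).hgt (x i) (y i) ≤ (T i).dist (x i) (y i) then (T i).dist (x i) (y i) else (T i).dist (x i) (y i) - (T i).hgt (x i) (y i))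
          (fun i => if 2 * (T i).hgt (x i) (y i) ≤ (T i).dist (x i) (y i) then (T i).dist (x i) (y i) - (T i).hgt (x i) (y i) else 0)
          (fun i => (T i).dist (x i) (y i) - (T i).hgt (x i) (y i))
          (fun i => if 2 * (T i).hgt (x i) (y i) ≤ (T i).dist (x i) (y i) then (T i).dist (x i) (y i) else 0)
          (by
        intro i
        have hhRi := hhR i
        try dsimp only
        split_ifs <;> omega)
          (by
        rw [← hN]
        refine Finset.sum_lt_sum (fun i _ => ?_) ⟨i1, Finset.mem_univ i1, ?_⟩
        · have hhRi := hhR i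
          try dsimp only
          split_ifs <;> omega
        · have hhRi := hhR i1
          have ha := hI1a
          have hb := hI1b
          try dsimp only
          split_ifs <;> omega)
        beta_reduce at h1 h2 h3 h4 h5 h6 h7
        rw [hX] at h1
        rw [hY] at h4
        linarith
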